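/- Let (H, Δ, ε, [−,−,−]) be a Hopf heap over a field k and suppose ∘ is a multiplication making (H, ∘, 1, Δ, ε, S_∘) a Hopf algebra on the same coalgebra (with unit 1 group-like), such that a∘[b,c,d] = [a₁∘b, a₂∘c, a₃∘d] for all a,b,c,d ∈ H. Define a·b := [a,1,b] and S(a) := [1,a,1]. Then (H,·,Δ,ε,S) is a Hopf algebra with unit 1, and (H,·,∘) is a Hopf brace, i.e. a∘(b·c) = (a₁∘b)·S(a₂)·(a₃∘c) for all a,b,c ∈ H. -/
import Mathlib


open TensorProduct

noncomputable section

variable (k : Type*) [Field k]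

section Shuffles

variable (A B P Q R S : Type*)
  [AddCommGroup A] [Module k A] [AddCommGroup B] [Module k B]
  [AddCommGroup P] [Module k P] [AddCommGroup Q] [Module k Q]
  [AddCommGroup R] [Module k R] [AddCommGroup S] [Module k S]

/-- `(a ⊗ b) ⊗ ((p ⊗ q) ⊗ (r ⊗ s)) ↦ (a ⊗ (q ⊗ r)) ⊗ (b ⊗ (p ⊗ s))`, the shuffle appearing in
the compatibility of a Hopf-heap bracket with comultiplication:
`Δ([a,b,c]) = [a₁,b₂,c₁] ⊗ [a₂,b₁,c₂]`. -/
def sweedlerShuffle :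
    ((A ⊗[k] B) ⊗[k] ((P ⊗[k] Q) ⊗[k] (R ⊗[k] S))) →ₗ[k]
      ((A ⊗[k] (Q ⊗[k] R)) ⊗[k] (B ⊗[k] (P ⊗[k] S))) :=
  (tensorTensorTensorComm k A B (Q ⊗[k] R) (P ⊗[k] S)).toLinearMap ∘ₗ
    (TensorProduct.map LinearMap.id
      ((tensorTensorTensorComm k Q P R S).toLinearMap ∘ₗ
        TensorProduct.map (TensorProduct.comm k P Q).toLinearMap LinearMap.id))

/-- `u₁ ⊗ (u₂ ⊗ (u₃ ⊗ u₄)) ↦ (u₁ ⊗ (u₄ ⊗ u₂)) ⊗ u₃`, the shuffle appearing in the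
Rota–Baxter identity. -/
def rbShuffle :
    (A ⊗[k] (P ⊗[k] (Q ⊗[k] R))) →ₗ[k] ((A ⊗[k] (R ⊗[k] P)) ⊗[k] Q) :=
  (TensorProduct.assoc k A (R ⊗[k] P) Q).symm.toLinearMap ∘ₗ
    TensorProduct.map LinearMap.id
      ((TensorProduct.comm k Q (R ⊗[k] P)).toLinearMap ∘ₗ
        (TensorProduct.assoc k Q R P).toLinearMap ∘ₗ
        (TensorProduct.comm k P (Q ⊗[k] R)).toLinearMap)

end Shuffles

section Mul

variable {C : Type*} [AddCommGroup C] [Module k C]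

/-- Right multiplication `a ↦ μ (a ⊗ b)` by a fixed element, for a bilinear product `μ`. -/
def rmulBy (μ : (C ⊗[k] C) →ₗ[k] C) (b : C) : C →ₗ[k] C :=
  μ ∘ₗ ((TensorProduct.mk k C C).flip b)

end Mul

section Heap

variable {C : Type*} [AddCommGroup C] [Module k C] [Coalgebra k C]

/-- Iterated comultiplication `a ↦ a₁ ⊗ (a₂ ⊗ a₃)`. -/
def comul2 : C →ₗ[k] (C ⊗[k] (C ⊗[k] C)) :=
  (TensorProduct.map LinearMap.id Coalgebra.comul) ∘ₗ Coalgebra.comul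

/-- Iterated comultiplication `a ↦ a₁ ⊗ (a₂ ⊗ (a₃ ⊗ a₄))`. -/
def comul3 : C →ₗ[k] (C ⊗[k] (C ⊗[k] (C ⊗[k] C))) :=
  (TensorProduct.map LinearMap.id (comul2 k)) ∘ₗ Coalgebra.comul

/-- The pointwise ternary bracket `[a,b,c]` of a Hopf heap with structure map `χ`. -/
def br (χ : (C ⊗[k] (C ⊗[k] C)) →ₗ[k] C) (a b c : C) : C := χ (a ⊗ₜ[k] (b ⊗ₜ[k] c))

/-- `x` is a group-like element of the coalgebra `C`. -/
def IsGrouplike (x : C) : Prop :=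
  Coalgebra.comul (R := k) x = x ⊗ₜ[k] x ∧ Coalgebra.counit (R := k) x = 1

/-- `(C, Δ, ε, χ)` is a Hopf heap: `χ` is a coalgebra map `C ⊗ C^cop ⊗ C → C`
(counit and comultiplication conditions, the latter in the Sweedler form
`Δ([a,b,c]) = [a₁,b₂,c₁] ⊗ [a₂,b₁,c₂]`), the bracket is associative
(`[[a,b,c],d,h] = [a,b,[c,d,h]]`), and `[c₁,c₂,a] = ε(c)a = [a,c₁,c₂]`. -/
structure IsHopfHeap (χ : (C ⊗[k] (C ⊗[k] C)) →ₗ[k] C) : Prop where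
  counit_br : ∀ a b c : C,
    Coalgebra.counit (R := k) (br k χ a b c) =
      Coalgebra.counit (R := k) a * Coalgebra.counit (R := k) b * Coalgebra.counit (R := k) c
  comul_br : ∀ a b c : C,
    Coalgebra.comul (R := k) (br k χ a b c) =
      TensorProduct.map χ χ (sweedlerShuffle k C C C C C C
        ((Coalgebra.comul (R := k) a) ⊗ₜ[k]
          ((Coalgebra.comul (R := k) b) ⊗ₜ[k] (Coalgebra.comul (R := k) c))))
  assoc_br : ∀ a b c d h : C,
    br k χ (br k χ a b c) d h = br k χ a b (br k χ c d h)
  left_cancel : ∀ c a : C,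
    χ ((TensorProduct.assoc k C C C) ((Coalgebra.comul (R := k) c) ⊗ₜ[k] a)) =
      Coalgebra.counit (R := k) c • a
  right_cancel : ∀ c a : C,
    χ (a ⊗ₜ[k] (Coalgebra.comul (R := k) c)) = Coalgebra.counit (R := k) c • a

/-- `B` is a Rota–Baxter operator on the Hopf heap `(C, Δ, χ)`:
`B [a,b,c] = [B a, B b, B c]` and
`B(a₁) ⊗ B(a₂) = [B(a)₁, B(B(a)₄), B(B(a)₂)] ⊗ B(a)₃`. -/
structure IsRBOp (χ : (C ⊗[k] (C ⊗[k] C)) →ₗ[k] C) (B : C →ₗ[k] C) : Prop where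
  map_br : ∀ a b c : C, B (br k χ a b c) = br k χ (B a) (B b) (B c)
  rb : ∀ a : C,
    TensorProduct.map B B (Coalgebra.comul (R := k) a) =
      TensorProduct.map (χ ∘ₗ TensorProduct.map LinearMap.id (TensorProduct.map B B))
        LinearMap.id (rbShuffle k C C C C (comul3 k (B a)))

/-- The multiplication `a ·ₓ b = [a, x, b]` of the Hopf algebra `H_x(C)`, as a linear map. -/
def heapMul (χ : (C ⊗[k] (C ⊗[k] C)) →ₗ[k] C) (x : C) : (C ⊗[k] C) →ₗ[k] C :=
  χ ∘ₗ TensorProduct.map LinearMap.id (TensorProduct.mk k C C x)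

/-- The antipode `S_x(a) = [x, a, x]` of the Hopf algebra `H_x(C)`, as a linear map. -/
def heapAntipode (χ : (C ⊗[k] (C ⊗[k] C)) →ₗ[k] C) (x : C) : C →ₗ[k] C :=
  χ ∘ₗ (TensorProduct.mk k C (C ⊗[k] C) x) ∘ₗ ((TensorProduct.mk k C C).flip x)

end Heap

section HeapHom

variable {C D : Type*} [AddCommGroup C] [Module k C] [Coalgebra k C]
  [AddCommGroup D] [Module k D] [Coalgebra k D]

/-- `f` is a homomorphism of Hopf heaps: a coalgebra map preserving the bracket. -/
def IsHeapHom (χC : (C ⊗[k] (C ⊗[k] C)) →ₗ[k] C) (χD : (D ⊗[k] (D ⊗[k] D)) →ₗ[k] D)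
    (f : C →ₗ[k] D) : Prop :=
  (∀ a : C, Coalgebra.comul (R := k) (f a) = TensorProduct.map f f (Coalgebra.comul (R := k) a)) ∧
  (∀ a : C, Coalgebra.counit (R := k) (f a) = Coalgebra.counit (R := k) a) ∧
  (∀ a b c : C, f (br k χC a b c) = br k χD (f a) (f b) (f c))

end HeapHom

section HopfAlg

variable (H : Type*) [Ring H] [HopfAlgebra k H]

/-- The Hopf-heap structure map `a ⊗ b ⊗ c ↦ a · S(b) · c` of a Hopf algebra. -/
def hopfHeapChi : (H ⊗[k] (H ⊗[k] H)) →ₗ[k] H :=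
  (LinearMap.mul' k H) ∘ₗ TensorProduct.map LinearMap.id
    ((LinearMap.mul' k H) ∘ₗ TensorProduct.map (HopfAlgebra.antipode (R := k)) LinearMap.id)

/-- The triple multiplication `a ⊗ (b ⊗ c) ↦ a·(b·c)`. -/
def mulTriple : (H ⊗[k] (H ⊗[k] H)) →ₗ[k] H :=
  (LinearMap.mul' k H) ∘ₗ TensorProduct.map LinearMap.id (LinearMap.mul' k H)

end HopfAlg

end
/-- a Hopf truss `(H,χ,∘)` in which `(H,∘,1)` is a Hopf algebra gives rise to a
Hopf brace, via `a·b := [a,1,b]`, `S(a) := [1,a,1]`. -/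
theorem hopfTruss_unital_gives_hopfBrace {k : Type*} [Field k] {H : Type*}
    [AddCommGroup H] [Module k H] [Coalgebra k H]
    (χ : (H ⊗[k] (H ⊗[k] H)) →ₗ[k] H) (hχ : IsHopfHeap k χ)
    (μ : (H ⊗[k] H) →ₗ[k] H) (e : H) (Tμ : H →ₗ[k] H)
    -- `(H, ∘ = μ, e, Tμ)` is a Hopf algebra on the same coalgebra, with `e` group-like
    (hassoc : ∀ a b c : H, μ (μ (a ⊗ₜ[k] b) ⊗ₜ[k] c) = μ (a ⊗ₜ[k] μ (b ⊗ₜ[k] c)))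
    (hunit : ∀ a : H, μ (e ⊗ₜ[k] a) = a ∧ μ (a ⊗ₜ[k] e) = a)
    (he : IsGrouplike k e)
    (hcomul : ∀ a b : H, Coalgebra.comul (R := k) (μ (a ⊗ₜ[k] b)) =
      TensorProduct.map μ μ ((tensorTensorTensorComm k H H H H)
        ((Coalgebra.comul (R := k) a) ⊗ₜ[k] (Coalgebra.comul (R := k) b))))
    (hcounit : ∀ a b : H, Coalgebra.counit (R := k) (μ (a ⊗ₜ[k] b)) =
      Coalgebra.counit (R := k) a * Coalgebra.counit (R := k) b)
    (hT : ∀ a : H,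
      μ (TensorProduct.map Tμ LinearMap.id (Coalgebra.comul (R := k) a)) =
        Coalgebra.counit (R := k) a • e ∧
      μ (TensorProduct.map LinearMap.id Tμ (Coalgebra.comul (R := k) a)) =
        Coalgebra.counit (R := k) a • e)
    -- the Hopf truss distributivity `a∘[b,c,d] = [a₁∘b, a₂∘c, a₃∘d]`
    (hdist : ∀ a b c d : H, μ (a ⊗ₜ[k] br k χ b c d) =
      χ ((TensorProduct.map (rmulBy k μ b)
        (TensorProduct.map (rmulBy k μ c) (rmulBy k μ d))) (comul2 k a))) :
    -- `(H, · , e, S)` with `a·b = [a,e,b]`, `S(a) = [e,a,e]` is a Hopf algebra...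
    (∀ a b c : H, br k χ (br k χ a e b) e c = br k χ a e (br k χ b e c)) ∧
    (∀ a : H, br k χ e e a = a ∧ br k χ a e e = a) ∧
    (∀ a b : H,
      Coalgebra.comul (R := k) (heapMul k χ e (a ⊗ₜ[k] b)) =
        TensorProduct.map (heapMul k χ e) (heapMul k χ e)
          ((tensorTensorTensorComm k H H H H)
            ((Coalgebra.comul (R := k) a) ⊗ₜ[k] (Coalgebra.comul (R := k) b)))) ∧
    (∀ a b : H,
      Coalgebra.counit (R := k) (heapMul k χ e (a ⊗ₜ[k] b)) =
        Coalgebra.counit (R := k) a * Coalgebra.counit (R := k) b) ∧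
    (∀ a : H,
      heapMul k χ e (TensorProduct.map (heapAntipode k χ e) LinearMap.id
          (Coalgebra.comul (R := k) a)) = Coalgebra.counit (R := k) a • e ∧
      heapMul k χ e (TensorProduct.map LinearMap.id (heapAntipode k χ e)
          (Coalgebra.comul (R := k) a)) = Coalgebra.counit (R := k) a • e) ∧
    -- ... and `(H, ·, ∘)` is a Hopf brace: `a∘(b·c) = (a₁∘b)·S(a₂)·(a₃∘c)`
    (∀ a b c : H, μ (a ⊗ₜ[k] heapMul k χ e (b ⊗ₜ[k] c)) =
      heapMul k χ e ((TensorProduct.map (heapMul k χ e) LinearMap.id)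
        ((TensorProduct.assoc k H H H).symm
          ((TensorProduct.map (rmulBy k μ b)
            (TensorProduct.map (heapAntipode k χ e) (rmulBy k μ c)))
            (comul2 k a))))) := by

  obtain ⟨hcu, hcm, hab, hlc, hrc⟩ := hχ
  obtain ⟨heD, heE⟩ := he
  -- unit laws for the heap product
  have hul : ∀ a : H, br k χ e e a = a := by
    intro a
    have h := hlc e a
    rw [heD, heE] at h
    simpa [br, TensorProduct.assoc_tmul] using h
  have hur : ∀ a : H, br k χ a e e = a := by
    intro a
    have h := hrc e a
    rw [heD, heE] at h
    simpa [br] using h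
  have hmuldef : ∀ a b : H, heapMul k χ e (a ⊗ₜ[k] b) = br k χ a e b := by
    intro a b
    simp [heapMul, br, TensorProduct.mk_apply]
  have hSdef : ∀ a : H, heapAntipode k χ e a = br k χ e a e := by
    intro a
    simp [heapAntipode, br, TensorProduct.mk_apply]
  refine ⟨?_, ?_, ?_, ?_, ?_, ?_⟩
  · intro a b c
    exact hab a e b e c
  · intro a
    exact ⟨hul a, hur a⟩
  · -- comultiplicativity of the heap product
    intro a b
    have key :
        (TensorProduct.map χ χ ∘ₗ sweedlerShuffle k H H H H H H ∘ₗ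
            TensorProduct.map LinearMap.id
              (TensorProduct.mk k (H ⊗[k] H) (H ⊗[k] H) (e ⊗ₜ[k] e))) =
          (TensorProduct.map (heapMul k χ e) (heapMul k χ e) ∘ₗ
            (tensorTensorTensorComm k H H H H).toLinearMap) := by
      apply TensorProduct.ext_fourfold'
      intro w x y z
      simp [sweedlerShuffle, heapMul, TensorProduct.mk_apply,
        tensorTensorTensorComm_tmul, TensorProduct.comm_tmul]
    have h1 := hcm a e b
    rw [heD] at h1
    rw [hmuldef, h1]
    have h2 := LinearMap.congr_fun key
      ((Coalgebra.comul (R := k) a) ⊗ₜ[k] (Coalgebra.comul (R := k) b))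
    simpa [TensorProduct.mk_apply] using h2
  · -- counit of the heap product
    intro a b
    rw [hmuldef, hcu a e b, heE, mul_one]
  · -- antipode axioms
    intro a
    constructor
    · have key : (heapMul k χ e ∘ₗ
          TensorProduct.map (heapAntipode k χ e) LinearMap.id) =
          χ ∘ₗ TensorProduct.mk k H (H ⊗[k] H) e := by
        apply TensorProduct.ext'
        intro x y
        have h1 : br k χ (br k χ e x e) e y = br k χ e x (br k χ e e y) := hab e x e e y
        simp only [LinearMap.comp_apply, TensorProduct.map_tmul, LinearMap.id_apply,
          TensorProduct.mk_apply, hmuldef, hSdef]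
        rw [h1, hul y]
        rfl
      have h2 := LinearMap.congr_fun key (Coalgebra.comul (R := k) a)
      simp only [LinearMap.comp_apply, TensorProduct.mk_apply] at h2
      rw [h2]
      exact hrc a e
    · have key : (heapMul k χ e ∘ₗ
          TensorProduct.map LinearMap.id (heapAntipode k χ e)) =
          χ ∘ₗ (TensorProduct.assoc k H H H).toLinearMap ∘ₗ
            ((TensorProduct.mk k (H ⊗[k] H) H).flip e) := by
        apply TensorProduct.ext'
        intro x y
        have h1 : br k χ (br k χ x e e) y e = br k χ x e (br k χ e y e) := hab x e e y e
        simp only [LinearMap.comp_apply, TensorProduct.map_tmul, LinearMap.id_apply,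
          TensorProduct.mk_apply, LinearMap.flip_apply, hmuldef, hSdef,
          LinearEquiv.coe_coe, TensorProduct.assoc_tmul]
        rw [← h1, hur x]
        rfl
      have h2 := LinearMap.congr_fun key (Coalgebra.comul (R := k) a)
      simp only [LinearMap.comp_apply, LinearMap.flip_apply, TensorProduct.mk_apply,
        LinearEquiv.coe_coe] at h2
      rw [h2]
      exact hlc a e
  · -- the Hopf brace identity
    intro a b c
    have keyB : χ =
        heapMul k χ e ∘ₗ TensorProduct.map (heapMul k χ e) LinearMap.id ∘ₗ
          (TensorProduct.assoc k H H H).symm.toLinearMap ∘ₗ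
          TensorProduct.map LinearMap.id
            (TensorProduct.map (heapAntipode k χ e) LinearMap.id) := by
      apply TensorProduct.ext'
      intro x t
      refine t.induction_on (by simp) ?_ (by intro u v hu hv; simp [TensorProduct.tmul_add, hu, hv])
      intro y z
      simp only [LinearMap.comp_apply, TensorProduct.map_tmul, LinearMap.id_apply,
        LinearEquiv.coe_coe, TensorProduct.assoc_symm_tmul, hmuldef, hSdef]
      have h1 : br k χ (br k χ x e (br k χ e y e)) e z =
          br k χ x e (br k χ (br k χ e y e) e z) := hab x e (br k χ e y e) e z
      have h2 : br k χ (br k χ e y e) e z = br k χ e y (br k χ e e z) := hab e y e e z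
      have h3 : br k χ (br k χ x e e) y z = br k χ x e (br k χ e y z) := hab x e e y z
      rw [h1, h2, hul z, ← h3, hur x]
      rfl
    have hre : heapAntipode k χ e ∘ₗ rmulBy k μ e = heapAntipode k χ e := by
      apply LinearMap.ext
      intro x
      simp [rmulBy, (hunit x).2]
    rw [hmuldef, hdist a b e c]
    have h4 := LinearMap.congr_fun (congrArg (fun f => f ∘ₗ
        TensorProduct.map (rmulBy k μ b)
          (TensorProduct.map (rmulBy k μ e) (rmulBy k μ c))) keyB) (comul2 k a)
    simp only [LinearMap.comp_apply] at h4
    rw [h4]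
    have h5 : (TensorProduct.map LinearMap.id
          (TensorProduct.map (heapAntipode k χ e) LinearMap.id)) ∘ₗ
        (TensorProduct.map (rmulBy k μ b)
          (TensorProduct.map (rmulBy k μ e) (rmulBy k μ c))) =
        TensorProduct.map (rmulBy k μ b)
          (TensorProduct.map (heapAntipode k χ e) (rmulBy k μ c)) := by
      rw [← TensorProduct.map_comp, ← TensorProduct.map_comp, hre]
      simp
    have h6 := LinearMap.congr_fun h5 (comul2 k a)
    simp only [LinearMap.comp_apply] at h6
    rw [h6]
    rfl
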